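/- arXiv:1209.1001 — 3 statements merged into one kernel-verified Lean document; each statement's English description precedes it below -/
import Mathlib

section
/- Let q ≥ 2 and λ ∈ ℂ with λ ∉ [-2√q, 2√q]. Then the quadratic equation qα² - λα + 1 = 0 has exactly one root α with |α| < 1/√q. -/
/-- For `q ≥ 2` and complex `λ` outside `[-2√q, 2√q]`, the quadratic
`qα² - λα + 1 = 0` has exactly one root `α` with `|α| < 1/√q`. -/
theorem stmt_0 (q : ℕ) (hq : 2 ≤ q) (lam : ℂ)
    (hlam : ∀ x : ℝ, x ∈ Set.Icc (-(2 * Real.sqrt q)) (2 * Real.sqrt q) → (x : ℂ) ≠ lam) :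
    ∃! α : ℂ, (q : ℂ) * α ^ 2 - lam * α + 1 = 0 ∧ ‖α‖ < 1 / Real.sqrt q := by
  have hq0 : (0:ℝ) < q := by exact_mod_cast Nat.lt_of_lt_of_le Nat.zero_lt_two hq
  have hs0 : (0:ℝ) < Real.sqrt q := Real.sqrt_pos.mpr hq0
  have hsq2 : Real.sqrt q ^ 2 = q := Real.sq_sqrt hq0.le
  have hqC : (q:ℂ) ≠ 0 := Nat.cast_ne_zero.mpr (by omega)
  obtain ⟨s, hs⟩ := IsAlgClosed.exists_pow_nat_eq (k := ℂ) (lam ^ 2 - 4 * q) two_pos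
  set a : ℂ := (lam + s) / (2 * q) with ha
  set b : ℂ := (lam - s) / (2 * q) with hb
  have hsum : (q:ℂ) * (a + b) = lam := by
    rw [ha, hb]; field_simp; ring
  have hprod : (q:ℂ) * (a * b) = 1 := by
    rw [ha, hb]; field_simp
    linear_combination (-1:ℂ) * hs
  clear_value a b
  have hfac : ∀ α : ℂ, (q:ℂ) * α ^ 2 - lam * α + 1 = (q:ℂ) * (α - a) * (α - b) := by
    intro α
    linear_combination α * hsum - hprod
  have hroot : ∀ α : ℂ, (q:ℂ) * α ^ 2 - lam * α + 1 = 0 ↔ (α = a ∨ α = b) := by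
    intro α
    rw [hfac]
    constructor
    · intro h
      rcases mul_eq_zero.mp h with h | h
      · rcases mul_eq_zero.mp h with h | h
        · exact absurd h hqC
        · exact Or.inl (sub_eq_zero.mp h)
      · exact Or.inr (sub_eq_zero.mp h)
    · rintro (rfl | rfl) <;> ring
  have habC : a * b = 1 / (q:ℂ) := by
    field_simp
    linear_combination hprod
  have habsprod : ‖a‖ * ‖b‖ = 1 / (q:ℝ) := by
    rw [← norm_mul, habC]
    simp [Complex.norm_natCast]
  -- the two roots have different moduli
  have hne : ‖a‖ ≠ ‖b‖ := by
    intro h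
    have ha2 : ‖a‖ ^ 2 = 1 / (q:ℝ) := by
      rw [sq]; nth_rewrite 2 [h]; exact habsprod
    have ha0 : a ≠ 0 := by
      intro h0
      rw [h0, zero_mul, mul_zero] at hprod
      exact one_ne_zero hprod.symm
    have hconj : (starRingEnd ℂ) a = b := by
      have h1 : a * (starRingEnd ℂ) a = ((‖a‖ ^ 2 : ℝ) : ℂ) := by
        rw [Complex.mul_conj]; norm_cast; rw [Complex.sq_norm]
      have h2 : a * (starRingEnd ℂ) a = a * b := by
        rw [h1, ha2, habC]; push_cast; ring
      exact mul_left_cancel₀ ha0 h2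
    have hlamre : lam = ((2 * q * a.re : ℝ) : ℂ) := by
      rw [← hsum, ← hconj, Complex.add_conj]
      push_cast; ring
    have habs_a : ‖a‖ = 1 / Real.sqrt q := by
      have : ‖a‖ ^ 2 = (1 / Real.sqrt q) ^ 2 := by
        rw [ha2]; field_simp; exact hsq2
      have h1 : (0:ℝ) ≤ ‖a‖ := norm_nonneg a
      calc ‖a‖ = Real.sqrt (‖a‖ ^ 2) := (Real.sqrt_sq h1).symm
        _ = Real.sqrt ((1 / Real.sqrt q) ^ 2) := by rw [this]
        _ = 1 / Real.sqrt q := Real.sqrt_sq (by positivity)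
    have hre : |a.re| ≤ 1 / Real.sqrt q := habs_a ▸ Complex.abs_re_le_norm a
    have hre1 : |2 * q * a.re| ≤ 2 * Real.sqrt q := by
      rw [abs_mul, abs_mul]
      have : |(q:ℝ)| = q := abs_of_pos hq0
      rw [this, abs_two]
      have h2 : (q:ℝ) * |a.re| ≤ Real.sqrt q := by
        calc (q:ℝ) * |a.re| ≤ (q:ℝ) * (1 / Real.sqrt q) := by
              exact mul_le_mul_of_nonneg_left hre hq0.le
          _ = Real.sqrt q := by
              rw [← hsq2]; field_simp; rw [Real.sqrt_sq hs0.le]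
      nlinarith
    have hm := abs_le.mp hre1
    exact hlam (2 * q * a.re) (Set.mem_Icc.mpr ⟨hm.1, hm.2⟩) hlamre.symm
  -- helper: given the smaller root, conclude
  have key : ∀ u v : ℂ, (∀ α : ℂ, (q:ℂ) * α ^ 2 - lam * α + 1 = 0 ↔ (α = u ∨ α = v)) →
      ‖u‖ * ‖v‖ = 1 / (q:ℝ) → ‖u‖ < ‖v‖ →
      ∃! α : ℂ, (q : ℂ) * α ^ 2 - lam * α + 1 = 0 ∧ ‖α‖ < 1 / Real.sqrt q := by
    intro u v hiff hp hlt
    have ht2 : (1 / Real.sqrt q) ^ 2 = 1 / (q:ℝ) := by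
      rw [div_pow, one_pow, hsq2]
    have ht0 : (0:ℝ) < 1 / Real.sqrt q := by positivity
    have hu0 : (0:ℝ) ≤ ‖u‖ := norm_nonneg u
    have hult : ‖u‖ < 1 / Real.sqrt q := by nlinarith
    have hvge : ¬ ‖v‖ < 1 / Real.sqrt q := by
      intro hc; nlinarith
    refine ⟨u, ⟨(hiff u).mpr (Or.inl rfl), hult⟩, ?_⟩
    rintro β ⟨hβ, hβlt⟩
    rcases (hiff β).mp hβ with rfl | rfl
    · rfl
    · exact absurd hβlt hvge
  rcases lt_or_gt_of_ne hne with h | h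
  · exact key a b hroot habsprod h
  · refine key b a (fun α => ?_) ?_ h
    · rw [hroot α, or_comm]
    · rw [mul_comm]; exact habsprod
end

section
/- Let q ≥ 2 and λ ∈ [-2√q, 2√q] ⊂ ℝ. Then the linear recurrence λu_k - q u_{k+1} - u_{k-1} = 0 (for k ≥ 1) has no nonzero solution (u_k)_{k≥0} satisfying ∑_{n≥0} q^n u_n² < ∞. -/
open Filter

/-- For `q ≥ 2` and real `λ ∈ [-2√q, 2√q]`, the recurrence
`λ u_k - q u_{k+1} - u_{k-1} = 0` (k ≥ 1) has no nonzero solution with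
`∑ qⁿ uₙ² < ∞`. -/
theorem stmt_1 (q : ℕ) (hq : 2 ≤ q) (lam : ℝ)
    (hlam : lam ∈ Set.Icc (-(2 * Real.sqrt q)) (2 * Real.sqrt q))
    (u : ℕ → ℝ)
    (hrec : ∀ k : ℕ, 1 ≤ k → lam * u k - q * u (k + 1) - u (k - 1) = 0)
    (hsum : Summable fun n : ℕ => (q : ℝ) ^ n * u n ^ 2) :
    ∀ n, u n = 0 := by
  have hqpos : (0:ℝ) < (q:ℝ) := by
    have : (0:ℕ) < q := by omega
    exact_mod_cast this
  set a : ℕ → ℝ := fun n => (q:ℝ) ^ n * u n ^ 2 with ha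
  have hanon : ∀ n, 0 ≤ a n := fun n => by positivity
  have hatend : Tendsto a atTop (nhds 0) := hsum.tendsto_atTop_zero
  set E : ℕ → ℝ := fun n => (q:ℝ)^n * ((q:ℝ) * u (n+1)^2 + u n ^2 - lam * u (n+1) * u n) with hE
  -- E is constant
  have hconst : ∀ n, E n = E 0 := by
    intro n
    induction n with
    | zero => rfl
    | succ n ih =>
      have hk := hrec (n+1) (by omega)
      simp only [Nat.add_sub_cancel] at hk
      have hstep : E (n+1) = E n := by
        simp only [hE, pow_succ]
        linear_combination (-( (q:ℝ)^n * ((q:ℝ) * u (n+2) - u n))) * hk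
      rw [hstep, ih]
  have hqs : Real.sqrt q ^ 2 = (q:ℝ) := Real.sq_sqrt hqpos.le
  have hlamabs : |lam| ≤ 2 * Real.sqrt q := abs_le.mpr ⟨hlam.1, hlam.2⟩
  -- the cross term bound
  have key : ∀ n, Real.sqrt (a (n+1)) * Real.sqrt (a n)
      = |Real.sqrt q * (q:ℝ)^n * u (n+1) * u n| := by
    intro n
    rw [← Real.sqrt_mul (hanon _)]
    have h2 : a (n+1) * a n = (Real.sqrt q * (q:ℝ)^n * u (n+1) * u n)^2 := by
      simp only [ha]
      linear_combination (-(((q:ℝ)^n)^2 * u (n+1)^2 * u n^2)) * hqs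
    rw [h2, Real.sqrt_sq_eq_abs]
  have hb : ∀ n, |lam * ((q:ℝ)^n * (u (n+1) * u n))|
      ≤ 2 * (Real.sqrt (a (n+1)) * Real.sqrt (a n)) := by
    intro n
    rw [key n, abs_mul]
    have h1 : |Real.sqrt q * (q:ℝ)^n * u (n+1) * u n|
        = Real.sqrt q * |(q:ℝ)^n * (u (n+1) * u n)| := by
      simp only [abs_mul, abs_of_nonneg (Real.sqrt_nonneg _),
        abs_of_nonneg (pow_nonneg hqpos.le n)]
      ring
    rw [h1]
    calc |lam| * |(q:ℝ)^n * (u (n+1) * u n)|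
        ≤ (2 * Real.sqrt q) * |(q:ℝ)^n * (u (n+1) * u n)| :=
          mul_le_mul_of_nonneg_right hlamabs (abs_nonneg _)
      _ = 2 * (Real.sqrt q * |(q:ℝ)^n * (u (n+1) * u n)|) := by ring
  have hEeq : ∀ n, E n = a (n+1) + a n - lam * ((q:ℝ)^n * (u (n+1) * u n)) := by
    intro n; simp only [hE, ha]; ring
  have hs2 : ∀ n, Real.sqrt (a n) ^ 2 = a n := fun n => Real.sq_sqrt (hanon n)
  have hlow : ∀ n, (Real.sqrt (a (n+1)) - Real.sqrt (a n))^2 ≤ E n := by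
    intro n
    have h := (abs_le.mp (hb n)).2
    rw [hEeq n]
    nlinarith [hs2 n, hs2 (n+1)]
  have hup : ∀ n, E n ≤ (Real.sqrt (a (n+1)) + Real.sqrt (a n))^2 := by
    intro n
    have h := (abs_le.mp (hb n)).1
    rw [hEeq n]
    nlinarith [hs2 n, hs2 (n+1)]
  -- limits
  have hsqrt_tend : Tendsto (fun n => Real.sqrt (a n)) atTop (nhds 0) := by
    have := (Real.continuous_sqrt.tendsto 0).comp hatend
    rw [Real.sqrt_zero] at this; exact this
  have hsqrt_tend' : Tendsto (fun n => Real.sqrt (a (n+1))) atTop (nhds 0) :=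
    hsqrt_tend.comp (tendsto_add_atTop_nat 1)
  have hsum_tend : Tendsto (fun n => (Real.sqrt (a (n+1)) + Real.sqrt (a n))^2) atTop (nhds 0) := by
    have := (hsqrt_tend'.add hsqrt_tend).pow 2
    simpa using this
  have hE0le : E 0 ≤ 0 := by
    have hcf : Tendsto (fun _ : ℕ => E 0) atTop (nhds (E 0)) := tendsto_const_nhds
    exact le_of_tendsto_of_tendsto' hcf hsum_tend
      (fun n => by rw [← hconst n]; exact hup n)
  have hE0 : E 0 = 0 := le_antisymm hE0le (le_trans (sq_nonneg _) (hlow 0))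
  have haconst : ∀ n, a n = a 0 := by
    intro n
    induction n with
    | zero => rfl
    | succ n ih =>
      have h1 : (Real.sqrt (a (n+1)) - Real.sqrt (a n))^2 ≤ 0 := by
        calc (Real.sqrt (a (n+1)) - Real.sqrt (a n))^2 ≤ E n := hlow n
          _ = 0 := by rw [hconst n, hE0]
      have h2 : Real.sqrt (a (n+1)) = Real.sqrt (a n) := by
        nlinarith [sq_nonneg (Real.sqrt (a (n+1)) - Real.sqrt (a n))]
      have h3 : a (n+1) = a n := (Real.sqrt_inj (hanon _) (hanon _)).mp h2
      rw [h3, ih]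
  have ha0 : a 0 = 0 := by
    have hconst' : Tendsto a atTop (nhds (a 0)) := by
      have : a = fun _ => a 0 := funext haconst
      rw [this]; exact tendsto_const_nhds
    exact tendsto_nhds_unique hconst' hatend
  intro n
  have hn : a n = 0 := by rw [haconst n, ha0]
  have hu2 : u n ^ 2 = 0 := by
    have hqn : (0:ℝ) < (q:ℝ)^n := pow_pos hqpos n
    simp only [ha] at hn
    nlinarith [sq_nonneg (u n)]
  exact pow_eq_zero_iff (two_ne_zero) |>.mp hu2
end

section
/- For λ outside I_q, with α the root of qα² - λα + 1 = 0 satisfying |α| < 1/√q and C_λ = 1/(λ - (q+1)α), the function f(x) = C_λ α^{d(O,x)} on the (q+1)-regular tree satisfies (λ - A₀)f = δ_O and belongs to ℓ². -/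
open SimpleGraph

private lemma tree_dist_ne {V : Type*} [DecidableEq V] {G : SimpleGraph V} (hconn : G.Connected)
    (hacyc : G.IsAcyclic) (O : V) {x y : V} (hadj : G.Adj x y) :
    G.dist O x ≠ G.dist O y := by
  intro h
  obtain ⟨p, hp, hpl⟩ := hconn.exists_path_of_dist O x
  obtain ⟨p', hp', hpl'⟩ := hconn.exists_path_of_dist O y
  have hxsupp : x ∉ p'.support := by
    intro hx
    have hspec := p'.take_spec hx
    have hlen : (p'.takeUntil x hx).length + (p'.dropUntil x hx).length = p'.length := by
      rw [← congr_arg Walk.length hspec, Walk.length_append]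
    have h1 : G.dist O x ≤ (p'.takeUntil x hx).length := SimpleGraph.dist_le _
    have h2 : (p'.dropUntil x hx).length = 0 := by omega
    exact hadj.ne (Walk.eq_of_length_eq_zero h2)
  have hw : (p'.concat hadj.symm).IsPath := by
    rw [← Walk.isPath_reverse_iff, Walk.reverse_concat, Walk.cons_isPath_iff]
    exact ⟨hp'.reverse, by simpa using hxsupp⟩
  have := hacyc.path_unique ⟨p, hp⟩ ⟨p'.concat hadj.symm, hw⟩
  have hlen := congr_arg (fun q : G.Path O x => q.1.length) this
  simp only [Walk.length_concat] at hlen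
  omega

private lemma tree_exists_down {V : Type*} {G : SimpleGraph V} (hconn : G.Connected)
    (O : V) {x : V} (hx : x ≠ O) :
    ∃ y, G.Adj x y ∧ G.dist O y + 1 = G.dist O x := by
  have hd0 : G.dist O x ≠ 0 := by
    intro h; exact hx ((hconn.dist_eq_zero_iff).1 h).symm
  obtain ⟨p, hp, hpl⟩ := hconn.exists_path_of_dist O x
  obtain ⟨w, h, q, hq⟩ := Walk.exists_eq_cons_of_ne (Ne.symm (Ne.symm hx)) p.reverse
  refine ⟨w, h, ?_⟩
  have hlq : q.length + 1 = G.dist O x := by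
    have := congr_arg Walk.length hq
    simp [Walk.length_cons] at this
    omega
  have h1 : G.dist O w ≤ q.length := by
    have := SimpleGraph.dist_le q.reverse
    simpa [SimpleGraph.dist_comm] using this
  have h2 : G.dist O x ≤ G.dist O w + 1 := by
    have := hconn.dist_triangle (u := O) (v := w) (w := x)
    have hwx : G.dist w x = 1 := SimpleGraph.dist_eq_one_iff_adj.2 h.symm
    omega
  omega

private lemma tree_unique_down {V : Type*} [DecidableEq V] {G : SimpleGraph V} (hconn : G.Connected)
    (hacyc : G.IsAcyclic) (O : V) {x y y' : V} (hxy : G.Adj x y) (hxy' : G.Adj x y')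
    (hy : G.dist O y + 1 = G.dist O x) (hy' : G.dist O y' + 1 = G.dist O x) : y = y' := by
  obtain ⟨p, hp, hpl⟩ := hconn.exists_path_of_dist O y
  obtain ⟨p', hp', hpl'⟩ := hconn.exists_path_of_dist O y'
  have hw : (p.concat hxy.symm).IsPath :=
    Walk.isPath_of_length_eq_dist _ (by rw [Walk.length_concat]; omega)
  have hw' : (p'.concat hxy'.symm).IsPath :=
    Walk.isPath_of_length_eq_dist _ (by rw [Walk.length_concat]; omega)
  have heq : p.concat hxy.symm = p'.concat hxy'.symm := by
    have := hacyc.path_unique ⟨p.concat hxy.symm, hw⟩ ⟨p'.concat hxy'.symm, hw'⟩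
    exact congr_arg Subtype.val this
  have hsupp := congr_arg (fun q : G.Walk O x => q.reverse.support) heq
  simp only [Walk.reverse_concat, Walk.support_cons] at hsupp
  rw [p.reverse.support_eq_cons, p'.reverse.support_eq_cons] at hsupp
  injection hsupp with h1 h2
  injection h2 with h3 _

private lemma sphere_card {V : Type*} [DecidableEq V] (G : SimpleGraph V)
    [∀ v : V, Fintype (G.neighborSet v)] (q : ℕ)
    (hconn : G.Connected) (hacyc : G.IsAcyclic)
    (hreg : ∀ v : V, G.degree v = q + 1) (O : V)
    (n : ℕ) (s : Finset V) (hs : ∀ x ∈ s, G.dist O x = n + 1) :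
    s.card ≤ (q + 1) * q ^ n := by
  classical
  induction n generalizing s with
  | zero =>
    have hsub : s ⊆ G.neighborFinset O := by
      intro x hx
      rw [mem_neighborFinset]
      exact dist_eq_one_iff_adj.1 (hs x hx)
    calc s.card ≤ (G.neighborFinset O).card := Finset.card_le_card hsub
      _ = q + 1 := by rw [card_neighborFinset_eq_degree, hreg]
      _ ≤ (q + 1) * q ^ 0 := by simp
  | succ n ih =>
    have hphi : ∀ v : V, v ≠ O → ∃ w, G.Adj v w ∧ G.dist O w + 1 = G.dist O v :=
      fun v hv => tree_exists_down hconn O hv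
    set φ : V → V := fun v => if h : ∃ w, G.Adj v w ∧ G.dist O w + 1 = G.dist O v
      then h.choose else v with hφdef
    have hφ : ∀ v : V, v ≠ O → G.Adj v (φ v) ∧ G.dist O (φ v) + 1 = G.dist O v := by
      intro v hv
      have h := hphi v hv
      simp only [hφdef, dif_pos h]
      exact h.choose_spec
    have hneO : ∀ x ∈ s, x ≠ O := by
      intro x hx h0
      have := hs x hx
      rw [h0, SimpleGraph.dist_self] at this
      omega
    have hmaps : ∀ x ∈ s, φ x ∈ s.image φ := fun x hx => Finset.mem_image_of_mem _ hx
    have himg : ∀ b ∈ s.image φ, G.dist O b = n + 1 := by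
      intro b hb
      obtain ⟨a, ha, rfl⟩ := Finset.mem_image.1 hb
      have := (hφ a (hneO a ha)).2
      have h2 := hs a ha
      omega
    have hcard : s.card ≤ q * (s.image φ).card := by
      apply Finset.card_le_mul_card_image_of_maps_to hmaps
      intro b hb
      have hbO : b ≠ O := by
        intro h0
        have := himg b hb
        rw [h0, SimpleGraph.dist_self] at this
        omega
      have hsub : s.filter (φ · = b) ⊆ (G.neighborFinset b).erase (φ b) := by
        intro a ha
        obtain ⟨has, hab⟩ := Finset.mem_filter.1 ha
        refine Finset.mem_erase.2 ⟨?_, ?_⟩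
        · intro h
          have h1 := (hφ b hbO).2
          have h2 := himg b hb
          have h3 := hs a has
          rw [h] at h3
          omega
        · rw [mem_neighborFinset]
          have := (hφ a (hneO a has)).1
          rw [hab] at this
          exact this.symm
      calc (s.filter (φ · = b)).card ≤ ((G.neighborFinset b).erase (φ b)).card :=
            Finset.card_le_card hsub
        _ = (G.neighborFinset b).card - 1 :=
            Finset.card_erase_of_mem (by rw [mem_neighborFinset]; exact (hφ b hbO).1)
        _ = q := by rw [card_neighborFinset_eq_degree, hreg]; omega
    calc s.card ≤ q * (s.image φ).card := hcard
      _ ≤ q * ((q + 1) * q ^ n) := Nat.mul_le_mul_left _ (ih _ himg)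
      _ = (q + 1) * q ^ (n + 1) := by ring

/-- On the (q+1)-regular tree with root `O`, for `λ ∉ [-2√q, 2√q]`, `α` the root
of `qα² - λα + 1 = 0` with `|α| < 1/√q` and `C = (λ - (q+1)α)⁻¹`, the function
`f x = C α^{d(O,x)}` is in `ℓ²` and satisfies `(λ - A₀) f = δ_O`. -/
theorem stmt_10 {V : Type*} [DecidableEq V] (G : SimpleGraph V)
    [∀ v : V, Fintype (G.neighborSet v)] (q : ℕ) (hq : 2 ≤ q)
    (hconn : G.Connected) (hacyc : G.IsAcyclic)
    (hreg : ∀ v : V, G.degree v = q + 1) (O : V)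
    (lam : ℂ)
    (hlam : ∀ x : ℝ, x ∈ Set.Icc (-(2 * Real.sqrt q)) (2 * Real.sqrt q) → (x : ℂ) ≠ lam)
    (α : ℂ) (hα : (q : ℂ) * α ^ 2 - lam * α + 1 = 0)
    (hαsmall : ‖α‖ < 1 / Real.sqrt q)
    (C : ℂ) (hC : C = (lam - ((q : ℂ) + 1) * α)⁻¹) :
    Memℓp (fun x : V => C * α ^ G.dist O x) 2 ∧
      ∀ x : V, lam * (C * α ^ G.dist O x)
          - ∑ y ∈ G.neighborFinset x, C * α ^ G.dist O y
        = if x = O then 1 else 0 := by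
  classical
  have hq1 : (1:ℝ) < (q:ℝ) := by exact_mod_cast (by omega : 1 < q)
  have hsq1 : (1:ℝ) < Real.sqrt q := by
    nlinarith [Real.sq_sqrt (by positivity : (0:ℝ) ≤ (q:ℝ)), Real.sqrt_nonneg (q:ℝ)]
  have habs1 : ‖α‖ < 1 :=
    lt_of_lt_of_le hαsmall (by rw [div_le_one (by linarith)]; linarith)
  have hden : lam - ((q:ℂ) + 1) * α ≠ 0 := by
    intro h0
    have hα2 : α ^ 2 = 1 := by linear_combination -α * h0 - hα
    have habs2 : ‖α‖ ^ 2 = 1 := by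
      rw [← norm_pow, hα2, norm_one]
    nlinarith [norm_nonneg α]
  have hCval : C * (lam - ((q:ℂ) + 1) * α) = 1 := by
    rw [hC]; exact inv_mul_cancel₀ hden
  constructor
  · -- ℓ² membership
    have haa0 : (0:ℝ) ≤ ‖α‖ ^ 2 := by positivity
    have hqr : (q:ℝ) * ‖α‖ ^ 2 < 1 := by
      have h1 : ‖α‖ ^ 2 < (1 / Real.sqrt q) ^ 2 :=
        pow_lt_pow_left₀ hαsmall (norm_nonneg α) (by norm_num)
      have h2 : (1 / Real.sqrt q) ^ 2 = 1 / (q:ℝ) := by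
        rw [div_pow, one_pow, Real.sq_sqrt (by positivity)]
      rw [h2] at h1
      calc (q:ℝ) * ‖α‖ ^ 2 < (q:ℝ) * (1 / (q:ℝ)) := by
            apply mul_lt_mul_of_pos_left h1 (by linarith)
        _ = 1 := by field_simp
    have hqr0 : (0:ℝ) ≤ (q:ℝ) * ‖α‖ ^ 2 := by positivity
    have hsumg : Summable (fun n : ℕ =>
        ((q:ℝ) + 1) * ‖C‖ ^ 2 * ((q:ℝ) * ‖α‖ ^ 2) ^ n) :=
      (summable_geometric_of_lt_one hqr0 hqr).mul_left _
    apply memℓp_gen' (C := ∑' n : ℕ,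
        ((q:ℝ) + 1) * ‖C‖ ^ 2 * ((q:ℝ) * ‖α‖ ^ 2) ^ n)
    intro s
    have hterm : ∀ x : V, ‖C * α ^ G.dist O x‖ ^ ((2 : ENNReal).toReal)
        = ‖C‖ ^ 2 * (‖α‖ ^ 2) ^ G.dist O x := by
      intro x
      rw [show ((2 : ENNReal).toReal) = ((2:ℕ):ℝ) by norm_num, Real.rpow_natCast,
        norm_mul, mul_pow, norm_pow, ← pow_mul, Nat.mul_comm (G.dist O x) 2, pow_mul]
    rw [Finset.sum_congr rfl (fun x _ => hterm x)]
    set N := s.sup (G.dist O) with hN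
    have hmaps : ∀ x ∈ s, G.dist O x ∈ Finset.range (N + 1) := by
      intro x hx
      rw [Finset.mem_range]
      exact Nat.lt_succ_of_le (Finset.le_sup hx)
    rw [← Finset.sum_fiberwise_of_maps_to hmaps
      (fun x => ‖C‖ ^ 2 * (‖α‖ ^ 2) ^ G.dist O x)]
    have hinner : ∀ n ∈ Finset.range (N + 1),
        (∑ x ∈ s.filter (fun x => G.dist O x = n),
          ‖C‖ ^ 2 * (‖α‖ ^ 2) ^ G.dist O x)
        ≤ ((q:ℝ) + 1) * ‖C‖ ^ 2 * ((q:ℝ) * ‖α‖ ^ 2) ^ n := by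
      intro n _
      have hsum_eq : (∑ x ∈ s.filter (fun x => G.dist O x = n),
          ‖C‖ ^ 2 * (‖α‖ ^ 2) ^ G.dist O x)
          = (s.filter (fun x => G.dist O x = n)).card
            * (‖C‖ ^ 2 * (‖α‖ ^ 2) ^ n) := by
        rw [Finset.sum_congr rfl (fun x hx => by
          rw [(Finset.mem_filter.1 hx).2]), Finset.sum_const, nsmul_eq_mul]
      rw [hsum_eq]
      have hcardb : ((s.filter (fun x => G.dist O x = n)).card : ℝ) ≤ ((q:ℝ) + 1) * (q:ℝ) ^ n := by
        rcases n with _ | m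
        · have : (s.filter (fun x => G.dist O x = 0)).card ≤ 1 := by
            apply Finset.card_le_one.2
            intro a ha b hb
            have ha' := (Finset.mem_filter.1 ha).2
            have hb' := (Finset.mem_filter.1 hb).2
            rw [(hconn.dist_eq_zero_iff).1 ha'] at ha'
            have haO : a = O := ((hconn.dist_eq_zero_iff).1 (Finset.mem_filter.1 ha).2).symm
            have hbO : b = O := ((hconn.dist_eq_zero_iff).1 (Finset.mem_filter.1 hb).2).symm
            rw [haO, hbO]
          have h1 : ((s.filter (fun x => G.dist O x = 0)).card : ℝ) ≤ 1 := by exact_mod_cast this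
          simpa using h1.trans (by nlinarith)
        · have := sphere_card G q hconn hacyc hreg O m
            (s.filter (fun x => G.dist O x = m + 1))
            (fun x hx => (Finset.mem_filter.1 hx).2)
          calc ((s.filter (fun x => G.dist O x = m + 1)).card : ℝ)
              ≤ (((q + 1) * q ^ m : ℕ) : ℝ) := by exact_mod_cast this
            _ ≤ ((q:ℝ) + 1) * (q:ℝ) ^ (m + 1) := by
                push_cast
                have h1 : (1:ℝ) ≤ (q:ℝ) := by linarith
                exact mul_le_mul_of_nonneg_left
                  (pow_le_pow_right₀ h1 (Nat.le_succ m)) (by positivity)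
      calc ((s.filter (fun x => G.dist O x = n)).card : ℝ)
            * (‖C‖ ^ 2 * (‖α‖ ^ 2) ^ n)
          ≤ (((q:ℝ) + 1) * (q:ℝ) ^ n) * (‖C‖ ^ 2 * (‖α‖ ^ 2) ^ n) := by
            apply mul_le_mul_of_nonneg_right hcardb (by positivity)
        _ = ((q:ℝ) + 1) * ‖C‖ ^ 2 * ((q:ℝ) * ‖α‖ ^ 2) ^ n := by
            rw [mul_pow]; ring
    calc (∑ n ∈ Finset.range (N + 1), ∑ x ∈ s.filter (fun x => G.dist O x = n),
          ‖C‖ ^ 2 * (‖α‖ ^ 2) ^ G.dist O x)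
        ≤ ∑ n ∈ Finset.range (N + 1),
            ((q:ℝ) + 1) * ‖C‖ ^ 2 * ((q:ℝ) * ‖α‖ ^ 2) ^ n :=
          Finset.sum_le_sum hinner
      _ ≤ ∑' n : ℕ, ((q:ℝ) + 1) * ‖C‖ ^ 2 * ((q:ℝ) * ‖α‖ ^ 2) ^ n :=
          Summable.sum_le_tsum _ (fun i _ => by positivity) hsumg
  · -- the eigenfunction equation
    intro x
    by_cases hx : x = O
    · have hdist : ∀ y ∈ G.neighborFinset O, G.dist O y = 1 := fun y hy =>
        dist_eq_one_iff_adj.2 ((mem_neighborFinset _ _ _).1 hy)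
      rw [if_pos hx, hx, SimpleGraph.dist_self,
        Finset.sum_congr rfl (fun y hy => by rw [hdist y hy]),
        Finset.sum_const, card_neighborFinset_eq_degree, hreg, nsmul_eq_mul]
      push_cast
      linear_combination hCval
    · obtain ⟨y₀, hy₀adj, hy₀d⟩ := tree_exists_down hconn O hx
      obtain ⟨m, hm⟩ : ∃ m, G.dist O x = m + 1 := ⟨G.dist O y₀, hy₀d.symm⟩
      have hy₀dist : G.dist O y₀ = m := by omega
      have hy₀mem : y₀ ∈ G.neighborFinset x := (mem_neighborFinset _ _ _).2 hy₀adj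
      have hothers : ∀ y ∈ (G.neighborFinset x).erase y₀, G.dist O y = m + 2 := by
        intro y hy
        obtain ⟨hyne, hymem⟩ := Finset.mem_erase.1 hy
        have hadj : G.Adj x y := (mem_neighborFinset _ _ _).1 hymem
        have h1 : G.dist O x ≠ G.dist O y := tree_dist_ne hconn hacyc O hadj
        have hxy1 : G.dist x y = 1 := dist_eq_one_iff_adj.2 hadj
        have hyx1 : G.dist y x = 1 := dist_eq_one_iff_adj.2 hadj.symm
        have h2 : G.dist O y ≤ G.dist O x + G.dist x y :=
          hconn.dist_triangle (u := O) (v := x) (w := y)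
        have h3 : G.dist O x ≤ G.dist O y + G.dist y x :=
          hconn.dist_triangle (u := O) (v := y) (w := x)
        have h4 : G.dist O y + 1 ≠ G.dist O x := by
          intro h
          exact hyne (tree_unique_down hconn hacyc O hadj hy₀adj h hy₀d)
        omega
      rw [if_neg hx, hm, ← Finset.add_sum_erase _ _ hy₀mem, hy₀dist,
        Finset.sum_congr rfl (fun y hy => by rw [hothers y hy]),
        Finset.sum_const, Finset.card_erase_of_mem hy₀mem,
        card_neighborFinset_eq_degree, hreg, Nat.add_sub_cancel, nsmul_eq_mul]
      push_cast
      linear_combination (-C * α ^ m) * hα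
end
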